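/- If iH₀' = Σ_{m=1}^{ℓ} ε_m h_m and iH₁ = Σ_{m=1}^{ℓ} δ_m y_m in the sp(ℓ) basis with all ε_m, δ_m real and nonzero, and if ω_m² ≠ ω_ℓ² for all 1 ≤ m ≤ ℓ-1 (where ω_m = ε_{m+1} - ε_m for m < ℓ and ω_ℓ = 2ε_ℓ), then the Lie algebra generated by iH₀' and iH₁ contains y_ℓ. -/

import Mathlib

open Matrix

attribute [local instance 100] LieRing.ofAssociativeRing

/-- The `N×N` standard matrix unit `e_{a,b}` (1-based indices). -/
noncomputable def e (N a b : ℕ) : Matrix (Fin N) (Fin N) ℂ :=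
  Matrix.of fun i j => if (i : ℕ) + 1 = a ∧ (j : ℕ) + 1 = b then 1 else 0

/-- `x_{a,b} = e_{a,b} - e_{b,a}`. -/
noncomputable def X (N a b : ℕ) : Matrix (Fin N) (Fin N) ℂ := e N a b - e N b a

/-- `y_{a,b} = i (e_{a,b} + e_{b,a})`. -/
noncomputable def Y (N a b : ℕ) : Matrix (Fin N) (Fin N) ℂ :=
  Complex.I • (e N a b + e N b a)

/-- Cartan generator of `sp(ℓ)`: `h_m = i (e_{m,m} - e_{m+ℓ,m+ℓ})`. -/
noncomputable def hC (l m : ℕ) : Matrix (Fin (2 * l)) (Fin (2 * l)) ℂ :=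
  Complex.I • (e (2 * l) m m - e (2 * l) (m + l) (m + l))

/-- Generators `x_m` of `sp(ℓ)`: `x_m = x_{ε_m - ε_{m+1}}` for `m < ℓ`,
`x_ℓ = x_{2ε_ℓ} = x_{2ℓ,ℓ}`. -/
noncomputable def xC (l m : ℕ) : Matrix (Fin (2 * l)) (Fin (2 * l)) ℂ :=
  if m = l then X (2 * l) (2 * l) l
  else X (2 * l) (m + 1) m - X (2 * l) (m + l) (m + l + 1)

/-- Generators `y_m` of `sp(ℓ)`: `y_m = y_{ε_m - ε_{m+1}}` for `m < ℓ`,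
`y_ℓ = y_{2ε_ℓ} = y_{2ℓ,ℓ}`. -/
noncomputable def yC (l m : ℕ) : Matrix (Fin (2 * l)) (Fin (2 * l)) ℂ :=
  if m = l then Y (2 * l) (2 * l) l
  else Y (2 * l) (m + 1) m - Y (2 * l) (m + l) (m + l + 1)

/-- `ω_m = ε_{m+1} - ε_m` for `m < ℓ`, `ω_ℓ = 2 ε_ℓ`. -/
noncomputable def w (l : ℕ) (ε : ℕ → ℝ) (m : ℕ) : ℝ :=
  if m = l then 2 * ε l else ε (m + 1) - ε m

lemma e_mul_e (N a b c d : ℕ) (hb1 : 1 ≤ b) (hb2 : b ≤ N) :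
    e N a b * e N c d = if b = c then e N a d else 0 := by
  ext i j
  rcases eq_or_ne b c with h | h
  · subst h
    rw [if_pos rfl, Matrix.mul_apply, Finset.sum_eq_single (⟨b - 1, by omega⟩ : Fin N)]
    · simp only [e, Matrix.of_apply]
      have : (b - 1) + 1 = b := by omega
      by_cases h1 : (i:ℕ)+1 = a <;> by_cases h2 : (j:ℕ)+1 = d <;> simp [h1, h2, this]
    · intro k _ hk
      simp only [e, Matrix.of_apply]
      have : (k:ℕ) + 1 ≠ b := by
        intro h; apply hk; apply Fin.ext; simp; omega
      simp [this]
    · simp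
  · rw [if_neg h, Matrix.mul_apply]
    simp only [e, Matrix.of_apply, Matrix.zero_apply]
    apply Finset.sum_eq_zero
    intro k _
    by_cases h1 : (k:ℕ)+1 = b
    · have : (k:ℕ)+1 ≠ c := by omega
      simp [this]
    · simp [h1]

lemma lie_e_e (N a b c d : ℕ) (hb1 : 1 ≤ b) (hb2 : b ≤ N) (hd1 : 1 ≤ d) (hd2 : d ≤ N) :
    ⁅e N a b, e N c d⁆ =
      (if b = c then e N a d else 0) - (if d = a then e N c b else 0) := by
  rw [Ring.lie_def, e_mul_e N a b c d hb1 hb2, e_mul_e N c d a b hd1 hd2]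

def kk (l : ℕ) (ε : ℕ → ℝ) (a : ℕ) : ℝ := if a ≤ l then ε a else -ε (a - l)

lemma msum_lie {n : ℕ} {α : Type*} (s : Finset α) (f : α → Matrix (Fin n) (Fin n) ℂ)
    (y : Matrix (Fin n) (Fin n) ℂ) : ⁅∑ i ∈ s, f i, y⁆ = ∑ i ∈ s, ⁅f i, y⁆ := by
  simp [Ring.lie_def, Finset.sum_mul, Finset.mul_sum, Finset.sum_sub_distrib]

lemma mlie_sum {n : ℕ} {α : Type*} (s : Finset α) (f : α → Matrix (Fin n) (Fin n) ℂ)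
    (y : Matrix (Fin n) (Fin n) ℂ) : ⁅y, ∑ i ∈ s, f i⁆ = ∑ i ∈ s, ⁅y, f i⁆ := by
  simp [Ring.lie_def, Finset.sum_mul, Finset.mul_sum, Finset.sum_sub_distrib]

lemma lie_diag_e (N n b c : ℕ) (hn1 : 1 ≤ n) (hn2 : n ≤ N) (hc1 : 1 ≤ c) (hc2 : c ≤ N) :
    ⁅e N n n, e N b c⁆ =
      (((if n = b then 1 else 0) - (if n = c then 1 else 0) : ℂ)) • e N b c := by
  rw [lie_e_e N n n b c hn1 hn2 hc1 hc2]
  have hcn : (if c = n then e N b n else 0) = (if n = c then e N b n else 0) := by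
    by_cases h : n = c
    · rw [if_pos h.symm, if_pos h]
    · rw [if_neg (fun hh => h hh.symm), if_neg h]
  rw [hcn]
  split_ifs with p q q
  · subst p; subst q; simp
  · subst p; simp
  · subst q; simp
  · simp

lemma lie_H0_e (l : ℕ) (ε : ℕ → ℝ) (H0 : Matrix (Fin (2*l)) (Fin (2*l)) ℂ)
    (hH0 : H0 = ∑ m ∈ Finset.Icc 1 l, ε m • hC l m)
    (b c : ℕ) (hb1 : 1 ≤ b) (hb2 : b ≤ 2*l) (hc1 : 1 ≤ c) (hc2 : c ≤ 2*l) :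
    ⁅H0, e (2*l) b c⁆ =
      (Complex.I * ((kk l ε b : ℝ) - (kk l ε c : ℝ))) • e (2*l) b c := by
  subst hH0
  rw [msum_lie]
  have step : ∀ m ∈ Finset.Icc 1 l,
      ⁅ε m • hC l m, e (2*l) b c⁆ =
      (Complex.I * ((ε m : ℂ) * (((if m = b then 1 else 0) - (if m = c then 1 else 0))
        - ((if m + l = b then 1 else 0) - (if m + l = c then 1 else 0))))) • e (2*l) b c := by
    intro m hm
    simp only [Finset.mem_Icc] at hm
    rw [smul_lie, hC, smul_lie, sub_lie,
      lie_diag_e (2*l) m b c hm.1 (by omega) hc1 hc2,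
      lie_diag_e (2*l) (m+l) b c (by omega) (by omega) hc1 hc2]
    have hsm : ∀ (v : Matrix (Fin (2*l)) (Fin (2*l)) ℂ), ε m • v = ((ε m : ℂ)) • v := by
      intro v; rw [← algebraMap_smul ℂ (ε m) v, Complex.coe_algebraMap]
    rw [smul_sub, smul_smul, smul_smul, ← sub_smul, hsm, smul_smul]
    congr 1
    ring
  rw [Finset.sum_congr rfl step, ← Finset.sum_smul]
  congr 1
  rw [← Finset.mul_sum]
  congr 1
  have key : ∀ x : ℕ, 1 ≤ x → x ≤ 2*l →
      (∑ m ∈ Finset.Icc 1 l, ((ε m : ℂ) * ((if m = x then 1 else 0) - (if m + l = x then 1 else 0))))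
      = (kk l ε x : ℝ) := by
    intro x hx1 hx2
    rcases le_or_gt x l with h | h
    · have hc : ∀ m ∈ Finset.Icc 1 l, (ε m : ℂ) * ((if m = x then 1 else 0) - (if m + l = x then 1 else 0))
          = if m = x then (ε x : ℂ) else 0 := by
        intro m hm
        simp only [Finset.mem_Icc] at hm
        by_cases hmx : m = x
        · subst hmx; have : ¬ (m + l = m) := by omega
          simp [this, show l ≠ 0 by omega]
        · have : ¬ (m + l = x) := by omega
          simp [hmx, this]
      rw [Finset.sum_congr rfl hc, Finset.sum_ite_eq' (Finset.Icc 1 l) x]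
      simp [Finset.mem_Icc, hx1, h, kk]
    · have hc : ∀ m ∈ Finset.Icc 1 l, (ε m : ℂ) * ((if m = x then 1 else 0) - (if m + l = x then 1 else 0))
          = if m = x - l then -(ε (x - l) : ℂ) else 0 := by
        intro m hm
        simp only [Finset.mem_Icc] at hm
        by_cases hmx : m = x - l
        · subst hmx
          have h1 : ¬ (x - l = x) := by omega
          have h2 : x - l + l = x := by omega
          simp [h1, h2]
        · have h1 : ¬ (m = x) := by omega
          have h2 : ¬ (m + l = x) := by omega
          simp [h1, h2, hmx]
      rw [Finset.sum_congr rfl hc, Finset.sum_ite_eq' (Finset.Icc 1 l) (x - l)]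
      have hmem : x - l ∈ Finset.Icc 1 l := by simp only [Finset.mem_Icc]; omega
      rw [if_pos hmem]
      rw [kk, if_neg (show ¬ x ≤ l by omega)]
      push_cast; ring
  have e1 := key b hb1 hb2
  have e2 := key c hc1 hc2
  push_cast
  rw [← e1, ← e2, ← Finset.sum_sub_distrib]
  apply Finset.sum_congr rfl
  intro m hm
  ring

lemma rsmul {n : ℕ} (r : ℝ) (v : Matrix (Fin n) (Fin n) ℂ) : r • v = (r : ℂ) • v := by
  rw [← algebraMap_smul ℂ r v, Complex.coe_algebraMap]

lemma ad2_e (l : ℕ) (ε : ℕ → ℝ) (H0 : Matrix (Fin (2*l)) (Fin (2*l)) ℂ)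
    (hH0 : H0 = ∑ m ∈ Finset.Icc 1 l, ε m • hC l m)
    (b c : ℕ) (hb1 : 1 ≤ b) (hb2 : b ≤ 2*l) (hc1 : 1 ≤ c) (hc2 : c ≤ 2*l) :
    ⁅H0, ⁅H0, e (2*l) b c⁆⁆ = (-((kk l ε b - kk l ε c)^2) : ℝ) • e (2*l) b c := by
  rw [lie_H0_e l ε H0 hH0 b c hb1 hb2 hc1 hc2, lie_smul,
    lie_H0_e l ε H0 hH0 b c hb1 hb2 hc1 hc2, smul_smul, rsmul]
  congr 1
  push_cast
  have : Complex.I * Complex.I = -1 := Complex.I_mul_I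
  ring_nf
  rw [Complex.I_sq]
  ring

lemma ad2_Y (l : ℕ) (ε : ℕ → ℝ) (H0 : Matrix (Fin (2*l)) (Fin (2*l)) ℂ)
    (hH0 : H0 = ∑ m ∈ Finset.Icc 1 l, ε m • hC l m)
    (b c : ℕ) (hb1 : 1 ≤ b) (hb2 : b ≤ 2*l) (hc1 : 1 ≤ c) (hc2 : c ≤ 2*l)
    (s : ℝ) (hs : (kk l ε b - kk l ε c)^2 = s) :
    ⁅H0, ⁅H0, Y (2*l) b c⁆⁆ = (-s : ℝ) • Y (2*l) b c := by
  rw [Y, lie_smul, lie_smul, lie_add, lie_add,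
    ad2_e l ε H0 hH0 b c hb1 hb2 hc1 hc2, ad2_e l ε H0 hH0 c b hc1 hc2 hb1 hb2]
  rw [show (kk l ε c - kk l ε b)^2 = s by rw [← hs]; ring, hs, ← smul_add, smul_comm]

lemma ad2_y (l : ℕ) (ε : ℕ → ℝ) (H0 : Matrix (Fin (2*l)) (Fin (2*l)) ℂ)
    (hH0 : H0 = ∑ m ∈ Finset.Icc 1 l, ε m • hC l m)
    (m : ℕ) (hm1 : 1 ≤ m) (hm2 : m ≤ l) :
    ⁅H0, ⁅H0, yC l m⁆⁆ = (-((w l ε m)^2) : ℝ) • yC l m := by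
  rcases eq_or_ne m l with h | h
  · subst h
    rw [yC, if_pos rfl, ad2_Y m ε H0 hH0 (2*m) m (by omega) (by omega) hm1 (by omega)
      ((w m ε m)^2) ?_]
    rw [kk, kk, if_neg (by omega), if_pos (by omega), w, if_pos rfl]
    have : 2*m - m = m := by omega
    rw [this]
    ring
  · have hml : m < l := lt_of_le_of_ne hm2 h
    rw [yC, if_neg h, lie_sub, lie_sub,
      ad2_Y l ε H0 hH0 (m+1) m (by omega) (by omega) hm1 (by omega) ((w l ε m)^2) ?_,
      ad2_Y l ε H0 hH0 (m+l) (m+l+1) (by omega) (by omega) (by omega) (by omega) ((w l ε m)^2) ?_,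
      ← smul_sub]
    · rw [kk, kk, if_neg (by omega), if_neg (by omega), w, if_neg h]
      have h1 : m + l - l = m := by omega
      have h2 : m + l + 1 - l = m + 1 := by omega
      rw [h1, h2]; ring
    · rw [kk, kk, if_pos (by omega), if_pos (by omega), w, if_neg h]

/-- if `iH₀' = Σ ε_m h_m`, `iH₁ = Σ δ_m y_m` in the `sp(ℓ)`
basis with all `ε_m, δ_m` nonzero and `ω_m² ≠ ω_ℓ²` for `1 ≤ m ≤ ℓ-1`, then
the real Lie algebra generated by `iH₀'` and `iH₁` contains `y_ℓ`. -/
theorem yl_mem_lieSpan_sp (l : ℕ) (ε δ : ℕ → ℝ)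
    (hε : ∀ m, 1 ≤ m → m ≤ l → ε m ≠ 0) (hδ : ∀ m, 1 ≤ m → m ≤ l → δ m ≠ 0)
    (hw : ∀ m, 1 ≤ m → m ≤ l - 1 → (w l ε m) ^ 2 ≠ (w l ε l) ^ 2)
    (H0 H1 : Matrix (Fin (2 * l)) (Fin (2 * l)) ℂ)
    (hH0 : H0 = ∑ m ∈ Finset.Icc 1 l, ε m • hC l m)
    (hH1 : H1 = ∑ m ∈ Finset.Icc 1 l, δ m • yC l m) :
    yC l l ∈ LieSubalgebra.lieSpan ℝ (Matrix (Fin (2 * l)) (Fin (2 * l)) ℂ)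
      {H0, H1} := by
  rcases Nat.eq_zero_or_pos l with hl | hl
  · subst hl
    have hz : yC 0 0 = 0 := by
      ext i j
      exact absurd i.2 (by omega)
    rw [hz]
    exact (LieSubalgebra.lieSpan ℝ _ {H0, H1}).zero_mem
  set S := LieSubalgebra.lieSpan ℝ (Matrix (Fin (2 * l)) (Fin (2 * l)) ℂ) {H0, H1} with hS
  have hmem0 : H0 ∈ S := LieSubalgebra.subset_lieSpan (by simp)
  have hmem1 : H1 ∈ S := LieSubalgebra.subset_lieSpan (by simp)
  set c : ℕ → ℕ → ℝ :=
    fun k m => δ m * ∏ j ∈ Finset.Icc 1 k, ((w l ε m)^2 - (w l ε j)^2) with hc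
  have key : ∀ k, (∑ m ∈ Finset.Icc 1 l, (c k m) • yC l m) ∈ S := by
    intro k
    induction k with
    | zero =>
      have : ∀ m ∈ Finset.Icc 1 l, c 0 m • yC l m = δ m • yC l m := by
        intro m _
        simp [hc]
      rw [Finset.sum_congr rfl this, ← hH1]
      exact hmem1
    | succ k ih =>
      have hterm : ∀ m ∈ Finset.Icc 1 l, c (k+1) m • yC l m
          = ⁅⁅H0, c k m • yC l m⁆, H0⁆ - (w l ε (k+1))^2 • (c k m • yC l m) := by
        intro m hm
        simp only [Finset.mem_Icc] at hm
        have h2 : ⁅⁅H0, yC l m⁆, H0⁆ = ((w l ε m)^2 : ℝ) • yC l m := by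
          rw [← lie_skew, ad2_y l ε H0 hH0 m hm.1 hm.2, neg_smul, neg_neg]
        rw [lie_smul, smul_lie, h2, smul_smul, smul_smul, ← sub_smul]
        congr 1
        rw [hc]
        simp only
        rw [Finset.prod_Icc_succ_top (by omega : 1 ≤ k + 1)]
        ring
      rw [Finset.sum_congr rfl hterm, Finset.sum_sub_distrib, ← Finset.smul_sum,
        ← msum_lie, ← mlie_sum]
      exact S.sub_mem (LieSubalgebra.lie_mem S (LieSubalgebra.lie_mem S hmem0 ih) hmem0)
        (S.smul_mem _ ih)
  have hfin : (∑ m ∈ Finset.Icc 1 l, c (l-1) m • yC l m) = c (l-1) l • yC l l := by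
    apply Finset.sum_eq_single_of_mem l (by simp [Finset.mem_Icc]; omega)
    intro m hm hne
    simp only [Finset.mem_Icc] at hm
    have hz : c (l-1) m = 0 := by
      rw [hc]
      simp only
      rw [Finset.prod_eq_zero (show m ∈ Finset.Icc 1 (l-1) by
        simp only [Finset.mem_Icc]; omega) (by rw [sub_self])]
      ring
    rw [hz, zero_smul]
  have hc0 : c (l-1) l ≠ 0 := by
    rw [hc]
    refine mul_ne_zero (hδ l hl le_rfl) (Finset.prod_ne_zero_iff.mpr ?_)
    intro j hj
    simp only [Finset.mem_Icc] at hj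
    exact sub_ne_zero.mpr (Ne.symm (hw j hj.1 hj.2))
  have := key (l-1)
  rw [hfin] at this
  have h3 : yC l l = (c (l-1) l)⁻¹ • (c (l-1) l • yC l l) := (inv_smul_smul₀ hc0 _).symm
  rw [h3]
  exact S.smul_mem _ this
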